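/- Among all rejection regions R ⊆ Ω in a countable sample space, the region R* = {x : p_a(x) > k·p_0(x)} maximizes EU(R) = Σ_{x∈R}[p_a(x)·P_a·(U_cr − U_II) − p_0(x)·P_0·(U_cn − U_I)], where k = (P_0/P_a)·((U_cn − U_I)/(U_cr − U_II)); moreover any region R with R* ⊆ R ⊆ {x : p_a(x) ≥ k·p_0(x)} achieves the same maximal value. -/

import Mathlib

/-- The region `R* = {x | pₐ x > k·p₀ x}` maximizes
`EU(R) = ∑_{x∈R} g x`, and any `R` with `R* ⊆ R ⊆ {x | pₐ x ≥ k·p₀ x}` attains the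
same maximal value, where `k = (P₀/Pₐ)·((Ucn-UI)/(Ucr-UII))`. -/
theorem likelihood_ratio_region_maximizes_EU
    {Ω : Type*} [Countable Ω] (p₀ pₐ : Ω → ℝ) (P₀ Pₐ UI Ucn Ucr UII : ℝ)
    (hP₀ : 0 < P₀) (hPa : 0 < Pₐ) (hUcn : UI < Ucn) (hUcr : UII < Ucr)
    (h₀pos : ∀ x, 0 ≤ p₀ x) (hapos : ∀ x, 0 ≤ pₐ x)
    (g : Ω → ℝ)
    (hg : ∀ y, g y = pₐ y * Pₐ * (Ucr - UII) - p₀ y * P₀ * (Ucn - UI))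
    (hsum : Summable fun y => |g y|)
    (k : ℝ) (hk : k = (P₀ / Pₐ) * ((Ucn - UI) / (Ucr - UII))) :
    (∀ R : Set Ω, (∑' y, Set.indicator R g y) ≤
        ∑' y, Set.indicator {x | k * p₀ x < pₐ x} g y) ∧
      (∀ R : Set Ω, {x | k * p₀ x < pₐ x} ⊆ R → R ⊆ {x | k * p₀ x ≤ pₐ x} →
        (∑' y, Set.indicator R g y) =
          ∑' y, Set.indicator {x | k * p₀ x < pₐ x} g y) := by
  have hc : 0 < Pₐ * (Ucr - UII) := mul_pos hPa (by linarith)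
  have hgc : ∀ x, g x = (pₐ x - k * p₀ x) * (Pₐ * (Ucr - UII)) := by
    intro x
    rw [hg, hk]
    field_simp [hPa.ne', (sub_pos.mpr hUcr).ne']
  have hgsum : Summable g := by
    have := hsum.of_abs
    exact this
  have hind : ∀ (R : Set Ω), Summable (Set.indicator R g) := by
    intro R
    apply Summable.of_abs
    apply hsum.of_nonneg_of_le (fun y => abs_nonneg _)
    intro y
    by_cases h : y ∈ R
    · simp [Set.indicator_of_mem h]
    · simp [Set.indicator_of_notMem h, abs_nonneg]
  have hle : ∀ (R : Set Ω) (y : Ω),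
      Set.indicator R g y ≤ Set.indicator {x | k * p₀ x < pₐ x} g y := by
    intro R y
    by_cases hy : k * p₀ y < pₐ y
    · by_cases hR : y ∈ R
      · simp [Set.indicator_apply, hy, hR]
      · simp only [Set.indicator_apply, Set.mem_setOf_eq, if_pos hy, if_neg hR]
        rw [Set.indicator_of_notMem hR]
        have : 0 < g y := by rw [hgc]; exact mul_pos (by linarith) hc
        linarith
    · by_cases hR : y ∈ R
      · simp only [Set.indicator_apply, Set.mem_setOf_eq, if_neg hy, if_pos hR]
        rw [Set.indicator_of_mem hR]
        have : g y ≤ 0 := by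
          rw [hgc]
          apply mul_nonpos_of_nonpos_of_nonneg
          · push_neg at hy; linarith
          · linarith
        linarith
      · simp [Set.indicator_apply, hy, hR]
  constructor
  · intro R
    exact Summable.tsum_le_tsum (hle R) (hind R) (hind _)
  · intro R h1 h2
    congr 1
    funext y
    by_cases hy : k * p₀ y < pₐ y
    · have hR : y ∈ R := h1 hy
      simp [Set.indicator_apply, hy, hR]
    · by_cases hR : y ∈ R
      · simp only [Set.indicator_apply, Set.mem_setOf_eq, if_neg hy, if_pos hR]
        rw [Set.indicator_of_mem hR]
        have h3 : k * p₀ y ≤ pₐ y := h2 hR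
        push_neg at hy
        rw [hgc]
        have : pₐ y - k * p₀ y = 0 := by linarith
        rw [this, zero_mul]
      · simp [Set.indicator_apply, hy, hR]
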